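/- Let L be a CSL on a separable Hilbert space H and let x ∈ H. Suppose the projection P onto the closed invariant subspace [Alg L · x] is generated by a minimal finite family of atoms A₁,…,Aₙ of L (P = E(A₁,…,Aₙ), and no proper subfamily generates P). Then Aₖx ≠ 0 for each k, and for every y ∈ PH there exists T ∈ Alg L with Tx = y; that is, {Alg L · x} = [Alg L · x], so x is a closed vector. -/

import Mathlib

noncomputable section

open scoped InnerProductSpace

variable {H : Type*} [NormedAddCommGroup H] [InnerProductSpace ℂ H] [CompleteSpace H]

/-- `P` is an orthogonal projection on `H`. -/
def IsOrthProj (P : H →L[ℂ] H) : Prop := IsSelfAdjoint P ∧ P ∘L P = P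

/-- The usual order on orthogonal projections: `P ≤ Q` iff `Q P = P` (range containment). -/
def pLE (P Q : H →L[ℂ] H) : Prop := Q ∘L P = P

/-- An atom of the lattice `L`: a nonzero interval projection `E - F` (`E, F ∈ L`, `F ≤ E`)
containing no interval projection other than `0` and itself. -/
def IsAtomOf (L : Set (H →L[ℂ] H)) (A : H →L[ℂ] H) : Prop :=
  A ≠ 0 ∧ (∃ E ∈ L, ∃ F ∈ L, pLE F E ∧ A = E - F) ∧
    ∀ E ∈ L, ∀ F ∈ L, pLE F E → pLE (E - F) A → E - F = 0 ∨ E - F = A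

/-- `L` is a commutative subspace lattice (CSL): a strongly closed complete lattice of
mutually commuting orthogonal projections containing `0` and `I`.  Completeness is expressed
by the existence, for every subset, of a member of `L` realizing the honest infimum
(intersection of ranges) and the honest supremum (closed span of ranges). -/
def IsCSL (L : Set (H →L[ℂ] H)) : Prop :=
  (∀ P ∈ L, IsOrthProj P) ∧
  (∀ P ∈ L, ∀ Q ∈ L, P ∘L Q = Q ∘L P) ∧
  (0 : H →L[ℂ] H) ∈ L ∧ (1 : H →L[ℂ] H) ∈ L ∧
  (∀ S ⊆ L, ∃ P ∈ L, (∀ Q ∈ S, pLE P Q) ∧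
      LinearMap.range (P : H →ₗ[ℂ] H) = ⨅ Q ∈ S, LinearMap.range (Q : H →ₗ[ℂ] H)) ∧
  (∀ S ⊆ L, ∃ P ∈ L, (∀ Q ∈ S, pLE Q P) ∧
      LinearMap.range (P : H →ₗ[ℂ] H) = (⨆ Q ∈ S, LinearMap.range (Q : H →ₗ[ℂ] H)).topologicalClosure)

/-- `Alg L`: the algebra of operators leaving every projection of `L` invariant. -/
def AlgL (L : Set (H →L[ℂ] H)) : Set (H →L[ℂ] H) :=
  {T | ∀ P ∈ L, (1 - P) ∘L (T ∘L P) = 0}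

/-- The (not necessarily closed) orbit `{Alg L · x}` of a vector `x`. -/
def orbit (L : Set (H →L[ℂ] H)) (x : H) : Set H :=
  {y | ∃ T ∈ AlgL L, T x = y}

/-- `P` is hyperatomic in `L`: `P = E(A₁, …, Aₖ)`, the smallest projection of `L`
dominating finitely many atoms `A₁, …, Aₖ` of `L`. -/
def HyperatomicIn (L : Set (H →L[ℂ] H)) (P : H →L[ℂ] H) : Prop :=
  ∃ (k : ℕ) (A : Fin k → H →L[ℂ] H), (∀ j, IsAtomOf L (A j)) ∧
    (∀ j, pLE (A j) P) ∧ ∀ F ∈ L, (∀ j, pLE (A j) F) → pLE P F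

set_option maxHeartbeats 1000000

namespace Stmt7Aux

lemma inner_self_adjoint (Q : H →L[ℂ] H) (hQ : IsSelfAdjoint Q) (u z : H) :
    ⟪u, Q z⟫_ℂ = ⟪Q u, z⟫_ℂ := by
  rw [← ContinuousLinearMap.adjoint_inner_left, ContinuousLinearMap.isSelfAdjoint_iff'.mp hQ]

lemma fix_of_mem_range {P : H →L[ℂ] H} (hP : P * P = P) {z : H}
    (hz : z ∈ LinearMap.range (P : H →ₗ[ℂ] H)) : P z = z := by
  obtain ⟨v, rfl⟩ := hz
  calc P (P v) = (P * P) v := rfl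
  _ = P v := by rw [hP]

lemma mem_range_iff_fix {P : H →L[ℂ] H} (hP : P * P = P) {z : H} :
    z ∈ LinearMap.range (P : H →ₗ[ℂ] H) ↔ P z = z :=
  ⟨fix_of_mem_range hP, fun h => ⟨z, h⟩⟩

lemma isClosed_range_of_idem {P : H →L[ℂ] H} (hP : P * P = P) :
    IsClosed (LinearMap.range (P : H →ₗ[ℂ] H) : Set H) := by
  have : (LinearMap.range (P : H →ₗ[ℂ] H) : Set H) = {z : H | P z = z} := by
    ext z; exact mem_range_iff_fix hP
  rw [this]
  exact isClosed_eq P.continuous continuous_id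

lemma orthProj_ext {P Q : H →L[ℂ] H} (hPsa : IsSelfAdjoint P) (hPi : P * P = P)
    (hQsa : IsSelfAdjoint Q) (hQi : Q * Q = Q)
    (h : LinearMap.range (P : H →ₗ[ℂ] H) = LinearMap.range (Q : H →ₗ[ℂ] H)) : P = Q := by
  have h1 : Q * P = P := by
    ext z
    exact fix_of_mem_range hQi (h ▸ LinearMap.mem_range_self _ z)
  have h2 : P * Q = Q := by
    ext z
    exact fix_of_mem_range hPi (h.symm ▸ LinearMap.mem_range_self _ z)
  calc P = star P := hPsa.symm
  _ = star (Q * P) := by rw [h1]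
  _ = star P * star Q := by rw [star_mul]
  _ = P * Q := by rw [hPsa.star_eq, hQsa.star_eq]
  _ = Q := h2

lemma pLE_antisymm {P Q : H →L[ℂ] H} (hPsa : IsSelfAdjoint P) (hQsa : IsSelfAdjoint Q)
    (h1 : pLE P Q) (h2 : pLE Q P) : P = Q := by
  have h1' : Q * P = P := h1
  have h2' : P * Q = Q := h2
  calc P = star P := hPsa.symm
  _ = star (Q * P) := by rw [h1']
  _ = star P * star Q := by rw [star_mul]
  _ = P * Q := by rw [hPsa.star_eq, hQsa.star_eq]
  _ = Q := h2'

lemma pLE_flip {P Q : H →L[ℂ] H} (hPsa : IsSelfAdjoint P) (hQsa : IsSelfAdjoint Q)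
    (h : pLE P Q) : P * Q = P := by
  have h' : Q * P = P := h
  calc P * Q = star (star Q * star P) := by rw [← star_mul, star_star]
  _ = star (Q * P) := by rw [hPsa.star_eq, hQsa.star_eq]
  _ = star P := by rw [h']
  _ = P := hPsa.star_eq

lemma pLE_trans {P Q R : H →L[ℂ] H} (h1 : pLE P Q) (h2 : pLE Q R) : pLE P R := by
  have h1' : Q * P = P := h1
  have h2' : R * Q = Q := h2
  show R * P = P
  calc R * P = R * (Q * P) := by rw [h1']
  _ = (R * Q) * P := by rw [mul_assoc]
  _ = Q * P := by rw [h2']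
  _ = P := h1'

def Cseq (M : ℕ → H →L[ℂ] H) : ℕ → H →L[ℂ] H
  | 0 => 1
  | j + 1 => Cseq M j * (1 - M j)

lemma Cseq_commute (M : ℕ → H →L[ℂ] H) (hcomm : ∀ i j, Commute (M i) (M j))
    (m i : ℕ) : Commute (Cseq M m) (M i) := by
  induction m with
  | zero => exact Commute.one_left _
  | succ j ih => exact ih.mul_left ((Commute.one_left _).sub_left (hcomm j i))

lemma Cseq_commute' (M : ℕ → H →L[ℂ] H) (hcomm : ∀ i j, Commute (M i) (M j))
    (m i : ℕ) : Commute (Cseq M m) (1 - M i) :=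
  (Commute.one_right _).sub_right (Cseq_commute M hcomm m i)

lemma one_sub_idem {M : H →L[ℂ] H} (h : M * M = M) : (1 - M) * (1 - M) = 1 - M := by
  rw [sub_mul, one_mul, mul_sub, mul_one, h, sub_self, sub_zero]

lemma Cseq_idem (M : ℕ → H →L[ℂ] H) (hidem : ∀ j, M j * M j = M j)
    (hcomm : ∀ i j, Commute (M i) (M j)) (m : ℕ) :
    Cseq M m * Cseq M m = Cseq M m := by
  induction m with
  | zero => simp [Cseq]
  | succ j ih =>
    show (Cseq M j * (1 - M j)) * (Cseq M j * (1 - M j)) = Cseq M j * (1 - M j)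
    rw [(Cseq_commute' M hcomm j j).symm.mul_mul_mul_comm, ih, one_sub_idem (hidem j)]

lemma Cseq_sa (M : ℕ → H →L[ℂ] H) (hsa : ∀ j, IsSelfAdjoint (M j))
    (hcomm : ∀ i j, Commute (M i) (M j)) (m : ℕ) : IsSelfAdjoint (Cseq M m) := by
  induction m with
  | zero => exact IsSelfAdjoint.one _
  | succ j ih =>
    show IsSelfAdjoint (Cseq M j * (1 - M j))
    have h1 : IsSelfAdjoint (1 - M j) := (IsSelfAdjoint.one _).sub (hsa j)
    rw [IsSelfAdjoint, star_mul, ih.star_eq, h1.star_eq]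
    exact (Cseq_commute' M hcomm j j).symm

lemma Cseq_mul_eq_zero (M : ℕ → H →L[ℂ] H) (hidem : ∀ j, M j * M j = M j)
    (hcomm : ∀ i j, Commute (M i) (M j)) (m i : ℕ) (h : i < m) :
    Cseq M m * M i = 0 := by
  induction m with
  | zero => omega
  | succ j ih =>
    show (Cseq M j * (1 - M j)) * M i = 0
    rcases Nat.lt_succ_iff_lt_or_eq.mp h with h' | h'
    · calc (Cseq M j * (1 - M j)) * M i = (Cseq M j * M i) * (1 - M j) := by
            rw [mul_assoc, mul_assoc, ((Commute.one_left _).sub_left (hcomm j i)).eq]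
      _ = 0 := by rw [ih h', zero_mul]
    · subst h'
      rw [mul_assoc, sub_mul, one_mul, hidem, sub_self, mul_zero]

lemma Cseq_telescope (M : ℕ → H →L[ℂ] H) (m : ℕ) :
    1 - Cseq M m = ∑ j ∈ Finset.range m, Cseq M j * M j := by
  induction m with
  | zero => simp [Cseq]
  | succ j ih =>
    rw [Finset.sum_range_succ, ← ih]
    show 1 - Cseq M j * (1 - M j) = 1 - Cseq M j + Cseq M j * M j
    rw [mul_sub, mul_one]
    abel

end Stmt7Aux

open Stmt7Aux in
/-- if the projection `P` onto `[Alg L · x]` is generated by a minimal finite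
family of atoms `A₁, …, Aₙ`, then each `Aₖ x ≠ 0`, every `y ∈ PH` is of the form `T x` with
`T ∈ Alg L`, and the orbit `{Alg L · x}` is closed (`x` is a closed vector). -/
theorem stmt7 (L : Set (H →L[ℂ] H)) (hL : IsCSL L) (x : H)
    (P : H →L[ℂ] H) (hPproj : IsOrthProj P) (hPL : P ∈ L)
    (hPrange : (LinearMap.range (P : H →ₗ[ℂ] H) : Set H) = closure (orbit L x))
    (n : ℕ) (A : Fin n → H →L[ℂ] H) (hatoms : ∀ j, IsAtomOf L (A j))
    (hdom : ∀ j, pLE (A j) P)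
    (hgen : ∀ F ∈ L, (∀ j, pLE (A j) F) → pLE P F)
    (hmin : ∀ S : Finset (Fin n), S ≠ Finset.univ →
      ¬ (∀ F ∈ L, (∀ j ∈ S, pLE (A j) F) → pLE P F)) :
    (∀ k, A k x ≠ 0) ∧ (∀ y : H, P y = y → ∃ T ∈ AlgL L, T x = y) ∧
      IsClosed (orbit L x) := by
  classical
  obtain ⟨hproj, hcommL, h0L, h1L, hmeet, hsup⟩ := hL
  have hsa : ∀ Q ∈ L, IsSelfAdjoint Q := fun Q hQ => (hproj Q hQ).1
  have hidem : ∀ Q ∈ L, Q * Q = Q := fun Q hQ => (hproj Q hQ).2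
  have hcomm : ∀ P₁ ∈ L, ∀ Q₁ ∈ L, P₁ * Q₁ = Q₁ * P₁ := hcommL
  have hPsa : IsSelfAdjoint P := hPproj.1
  have hPidem : P * P = P := hPproj.2
  -- L is closed under binary meets
  have meet2 : ∀ P₁ ∈ L, ∀ Q₁ ∈ L, P₁ * Q₁ ∈ L := by
    intro P₁ hP₁ Q₁ hQ₁
    obtain ⟨R, hRL, -, hRrange⟩ := hmeet {P₁, Q₁}
      (by rintro q (rfl | rfl) <;> assumption)
    have hPQidem : (P₁ * Q₁) * (P₁ * Q₁) = P₁ * Q₁ := by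
      rw [(show Commute Q₁ P₁ from hcomm Q₁ hQ₁ P₁ hP₁).mul_mul_mul_comm,
        hidem P₁ hP₁, hidem Q₁ hQ₁]
    have hPQsa : IsSelfAdjoint (P₁ * Q₁) := by
      rw [IsSelfAdjoint, star_mul, (hsa P₁ hP₁).star_eq, (hsa Q₁ hQ₁).star_eq]
      exact (hcomm Q₁ hQ₁ P₁ hP₁)
    have hrange : LinearMap.range (P₁ * Q₁ : H →ₗ[ℂ] H) = ⨅ Q ∈ ({P₁, Q₁} : Set (H →L[ℂ] H)), LinearMap.range (Q : H →ₗ[ℂ] H) := by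
      ext z
      simp only [Submodule.mem_iInf]
      constructor
      · rintro ⟨v, rfl⟩ Q hQmem
        rcases hQmem with rfl | rfl
        · exact ⟨Q₁ v, rfl⟩
        · refine ⟨P₁ v, ?_⟩
          show (Q * P₁) v = (P₁ * Q) v
          rw [hcomm Q hQ₁ P₁ hP₁]
      · intro h
        have h1 : P₁ z = z := fix_of_mem_range (hidem P₁ hP₁) (h P₁ (Or.inl rfl))
        have h2 : Q₁ z = z := fix_of_mem_range (hidem Q₁ hQ₁) (h Q₁ (Or.inr rfl))
        refine ⟨z, ?_⟩
        show P₁ (Q₁ z) = z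
        rw [h2, h1]
    have : P₁ * Q₁ = R :=
      orthProj_ext hPQsa hPQidem (hsa R hRL) (hidem R hRL) (hrange.trans hRrange.symm)
    rw [this]; exact hRL
  -- L is closed under binary joins
  have sup2 : ∀ P₁ ∈ L, ∀ Q₁ ∈ L, P₁ + Q₁ - P₁ * Q₁ ∈ L := by
    intro P₁ hP₁ Q₁ hQ₁
    set N := P₁ + Q₁ - P₁ * Q₁ with hN
    have hNP : N * P₁ = P₁ := by
      have e1 : (P₁ * Q₁) * P₁ = Q₁ * P₁ := by
        rw [hcomm P₁ hP₁ Q₁ hQ₁, mul_assoc, hidem P₁ hP₁]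
      rw [hN, sub_mul, add_mul, e1, hidem P₁ hP₁]
      abel
    have hNQ : N * Q₁ = Q₁ := by
      have e1 : (P₁ * Q₁) * Q₁ = P₁ * Q₁ := by
        rw [mul_assoc, hidem Q₁ hQ₁]
      rw [hN, sub_mul, add_mul, e1, hidem Q₁ hQ₁]
      abel
    have hNidem : N * N = N := by
      have hC : ((1 - P₁) * (1 - Q₁)) * ((1 - P₁) * (1 - Q₁)) = (1 - P₁) * (1 - Q₁) := by
        have hcm : Commute (1 - Q₁) (1 - P₁) :=
          ((Commute.one_left _).sub_left
            ((Commute.one_right _).sub_right (hcomm Q₁ hQ₁ P₁ hP₁))).symm.symm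
        rw [hcm.mul_mul_mul_comm, one_sub_idem (hidem P₁ hP₁), one_sub_idem (hidem Q₁ hQ₁)]
      have hNform : N = 1 - (1 - P₁) * (1 - Q₁) := by rw [hN]; noncomm_ring
      rw [hNform, one_sub_idem hC]
    have hNsa : IsSelfAdjoint N := by
      rw [hN, IsSelfAdjoint, star_sub, star_add, star_mul,
        (hsa P₁ hP₁).star_eq, (hsa Q₁ hQ₁).star_eq, hcomm Q₁ hQ₁ P₁ hP₁]
    obtain ⟨R, hRL, -, hRrange⟩ := hsup {P₁, Q₁}
      (by rintro q (rfl | rfl) <;> assumption)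
    have hrange : LinearMap.range (N : H →ₗ[ℂ] H) = ⨆ Q ∈ ({P₁, Q₁} : Set (H →L[ℂ] H)), LinearMap.range (Q : H →ₗ[ℂ] H) := by
      apply le_antisymm
      · rintro z ⟨v, rfl⟩
        have : N v = P₁ v + Q₁ (v - P₁ v) := by
          show (P₁ + Q₁ - P₁ * Q₁) v = P₁ v + Q₁ (v - P₁ v)
          rw [map_sub]
          have : (P₁ * Q₁) v = Q₁ (P₁ v) := by
            rw [hcomm P₁ hP₁ Q₁ hQ₁]; rfl
          simp only [ContinuousLinearMap.sub_apply, ContinuousLinearMap.add_apply, this]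
          abel
        show N v ∈ _
        rw [this]
        refine Submodule.add_mem _ ?_ ?_
        · exact Submodule.mem_iSup_of_mem P₁ (Submodule.mem_iSup_of_mem (Or.inl rfl)
            (LinearMap.mem_range_self _ v))
        · exact Submodule.mem_iSup_of_mem Q₁ (Submodule.mem_iSup_of_mem (Or.inr rfl)
            (LinearMap.mem_range_self _ (v - P₁ v)))
      · apply iSup_le; intro Q; apply iSup_le; intro hQmem
        rcases hQmem with rfl | rfl
        · rintro z ⟨v, rfl⟩
          refine ⟨Q v, ?_⟩
          show N (Q v) = Q v
          calc N (Q v) = (N * Q) v := rfl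
          _ = Q v := by rw [hNP]
        · rintro z ⟨v, rfl⟩
          refine ⟨Q v, ?_⟩
          show N (Q v) = Q v
          calc N (Q v) = (N * Q) v := rfl
          _ = Q v := by rw [hNQ]
    have hclosedN : IsClosed (LinearMap.range (N : H →ₗ[ℂ] H) : Set H) := isClosed_range_of_idem hNidem
    have hcl : (⨆ Q ∈ ({P₁, Q₁} : Set (H →L[ℂ] H)), LinearMap.range (Q : H →ₗ[ℂ] H)).topologicalClosure
        = LinearMap.range (N : H →ₗ[ℂ] H) := by
      rw [← hrange]
      exact le_antisymm (Submodule.topologicalClosure_minimal _ le_rfl hclosedN)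
        (Submodule.le_topologicalClosure _)
    have : N = R :=
      orthProj_ext hNsa hNidem (hsa R hRL) (hidem R hRL) (hRrange.trans hcl).symm
    have hNR : N = R := this
    rw [hNR]; exact hRL
  -- atom data
  have hexists : ∀ j, ∃ Ej, Ej ∈ L ∧ ∃ Fj, Fj ∈ L ∧ pLE Fj Ej ∧ A j = Ej - Fj :=
    fun j => (hatoms j).2.1
  choose E hEL Fc hFL hFE hAEF using hexists
  have hEF : ∀ j, E j * Fc j = Fc j := fun j => hFE j
  have hFEc : ∀ j, Fc j * E j = Fc j := fun j =>
    pLE_flip (hsa _ (hFL j)) (hsa _ (hEL j)) (hFE j)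
  have hAsa : ∀ j, IsSelfAdjoint (A j) := by
    intro j; rw [hAEF j]; exact (hsa _ (hEL j)).sub (hsa _ (hFL j))
  have hAidem : ∀ j, A j * A j = A j := by
    intro j
    rw [hAEF j, sub_mul, mul_sub, mul_sub, hidem _ (hEL j), hidem _ (hFL j), hEF j, hFEc j,
      sub_self, sub_zero]
  have hAcomm : ∀ j, ∀ Q ∈ L, A j * Q = Q * A j := by
    intro j Q hQ
    rw [hAEF j, sub_mul, mul_sub, hcomm _ (hEL j) Q hQ, hcomm _ (hFL j) Q hQ]
  have hAle : ∀ j, pLE (A j) (E j) := by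
    intro j
    show E j ∘L A j = A j
    show E j * A j = A j
    rw [hAEF j, mul_sub, hidem _ (hEL j), hEF j]
  -- atom dichotomy
  have dich : ∀ j, ∀ Q ∈ L, A j * Q = 0 ∨ pLE (A j) Q := by
    intro j Q hQ
    have hEQ : E j * Q ∈ L := meet2 _ (hEL j) _ hQ
    have hFQ : Fc j * Q ∈ L := meet2 _ (hFL j) _ hQ
    have h1 : pLE (Fc j * Q) (E j * Q) := by
      show (E j * Q) * (Fc j * Q) = Fc j * Q
      calc (E j * Q) * (Fc j * Q) = E j * ((Q * Fc j) * Q) := by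
            rw [mul_assoc, mul_assoc]
      _ = E j * ((Fc j * Q) * Q) := by rw [hcomm Q hQ _ (hFL j)]
      _ = (E j * Fc j) * (Q * Q) := by rw [mul_assoc, mul_assoc]
      _ = Fc j * Q := by rw [hEF j, hidem Q hQ]
    have h2 : pLE (E j * Q - Fc j * Q) (A j) := by
      show A j * (E j * Q - Fc j * Q) = E j * Q - Fc j * Q
      have e : E j * Q - Fc j * Q = A j * Q := by rw [hAEF j, sub_mul]
      rw [e, ← mul_assoc, hAidem j]
    rcases (hatoms j).2.2 _ hEQ _ hFQ h1 h2 with h | h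
    · left
      rw [hAEF j, sub_mul, h]
    · right
      have hAQ : A j * Q = A j := by
        rw [hAEF j, sub_mul, h, hAEF j]
      show Q * A j = A j
      rw [← hAcomm j Q hQ, hAQ]
  -- the minimal projection E(A j) =: M j
  have hMex : ∀ j, ∃ Mj, Mj ∈ L ∧ pLE (A j) Mj ∧ ∀ Q ∈ L, pLE (A j) Q → pLE Mj Q := by
    intro j
    obtain ⟨R, hRL, hRle, hRrange⟩ := hmeet {Q | Q ∈ L ∧ pLE (A j) Q} (fun q hq => hq.1)
    refine ⟨R, hRL, ?_, fun Q hQ hAQ => hRle Q ⟨hQ, hAQ⟩⟩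
    show R * A j = A j
    ext z
    show R (A j z) = A j z
    have hmem : A j z ∈ LinearMap.range (R : H →ₗ[ℂ] H) := by
      rw [hRrange]
      simp only [Submodule.mem_iInf]
      rintro Q ⟨hQL, hle⟩
      refine ⟨A j z, ?_⟩
      have : Q * A j = A j := hle
      calc Q (A j z) = (Q * A j) z := rfl
      _ = A j z := by rw [this]
    exact fix_of_mem_range (hidem R hRL) hmem
  choose M hML hAM hMmin using hMex
  -- x is fixed by P
  have hone : (1 : H →L[ℂ] H) ∈ AlgL L := by
    intro Q hQ
    show (1 - Q) * (1 * Q) = 0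
    rw [one_mul, sub_mul, one_mul, hidem Q hQ, sub_self]
  have hxorb : x ∈ orbit L x := ⟨1, hone, rfl⟩
  have hxP : P x = x := by
    have hmem : x ∈ (LinearMap.range (P : H →ₗ[ℂ] H) : Set H) := by
      rw [hPrange]; exact subset_closure hxorb
    exact fix_of_mem_range hPidem hmem
  -- any member of L fixing x dominates P
  have domfix : ∀ Q ∈ L, Q x = x → pLE P Q := by
    intro Q hQ hQx
    have horb : orbit L x ⊆ (LinearMap.range (Q : H →ₗ[ℂ] H) : Set H) := by
      rintro _ ⟨T, hT, rfl⟩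
      have h' : (1 - Q) * (T * Q) = 0 := hT Q hQ
      have hTQ : T * Q = Q * (T * Q) := by
        rwa [sub_mul, one_mul, sub_eq_zero] at h'
      have : T x = Q ((T * Q) x) := by
        conv_lhs => rw [← hQx]
        show (T * Q) x = Q ((T * Q) x)
        conv_lhs => rw [hTQ]
        rfl
      rw [this]
      exact LinearMap.mem_range_self _ _
    have hcl : closure (orbit L x) ⊆ (LinearMap.range (Q : H →ₗ[ℂ] H) : Set H) :=
      closure_minimal horb (isClosed_range_of_idem (hidem Q hQ))
    show Q * P = P
    ext z
    show Q (P z) = P z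
    refine fix_of_mem_range (hidem Q hQ) (hcl ?_)
    rw [← hPrange]
    exact LinearMap.mem_range_self _ z
  -- Part 1 : A k x ≠ 0
  have part1 : ∀ k, A k x ≠ 0 := by
    intro k hk0
    have hSne : (Finset.univ.erase k) ≠ Finset.univ := by
      intro h
      have hk : k ∈ Finset.univ.erase k := by rw [h]; exact Finset.mem_univ k
      exact Finset.notMem_erase k _ hk
    have hne := hmin _ hSne
    push_neg at hne
    obtain ⟨F₀, hF₀L, hF₀dom, hF₀not⟩ := hne
    have hW₁L : F₀ + E k - F₀ * E k ∈ L := sup2 _ hF₀L _ (hEL k)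
    have hPW₁ : pLE P (F₀ + E k - F₀ * E k) := by
      refine hgen _ hW₁L fun j => ?_
      by_cases hjk : j = k
      · subst hjk
        refine pLE_trans (hAle j) ?_
        show (F₀ + E j - F₀ * E j) * E j = E j
        rw [sub_mul, add_mul, mul_assoc, hidem _ (hEL j)]
        abel
      · refine pLE_trans (hF₀dom j (Finset.mem_erase.mpr ⟨hjk, Finset.mem_univ j⟩)) ?_
        show (F₀ + E k - F₀ * E k) * F₀ = F₀
        rw [sub_mul, add_mul, hidem _ hF₀L, mul_assoc, hcomm _ (hEL k) _ hF₀L,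
          ← mul_assoc, hidem _ hF₀L]
        abel
    have hW₁x : (F₀ + E k - F₀ * E k) x = x := by
      have h' : (F₀ + E k - F₀ * E k) * P = P := hPW₁
      calc (F₀ + E k - F₀ * E k) x = (F₀ + E k - F₀ * E k) (P x) := by rw [hxP]
      _ = ((F₀ + E k - F₀ * E k) * P) x := rfl
      _ = P x := by rw [h']
      _ = x := hxP
    have hEkx : E k x = Fc k x := by
      have h0 : (E k - Fc k) x = 0 := by rw [← hAEF k]; exact hk0
      have : E k x - Fc k x = 0 := h0
      exact sub_eq_zero.mp this
    have hVL : F₀ + Fc k - F₀ * Fc k ∈ L := sup2 _ hF₀L _ (hFL k)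
    have hVx : (F₀ + Fc k - F₀ * Fc k) x = x := by
      have expand : ∀ G : H →L[ℂ] H, (F₀ + G - F₀ * G) x = F₀ x + G x - F₀ (G x) := by
        intro G
        simp only [ContinuousLinearMap.sub_apply, ContinuousLinearMap.add_apply,
          ContinuousLinearMap.mul_apply]
      rw [expand, ← hEkx, ← expand, hW₁x]
    have hPV : pLE P (F₀ + Fc k - F₀ * Fc k) := domfix _ hVL hVx
    rcases dich k F₀ hF₀L with hAF | hAF
    · -- A k * F₀ = 0 : derive A k = 0
      have hVA : (F₀ + Fc k - F₀ * Fc k) * A k = A k := pLE_trans (hdom k) hPV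
      have hF₀A : F₀ * A k = 0 := by rw [← hAcomm k F₀ hF₀L, hAF]
      have hFkA : Fc k * A k = 0 := by
        rw [hAEF k, mul_sub, hFEc k, hidem _ (hFL k), sub_self]
      have hA0 : A k = 0 := by
        calc A k = (F₀ + Fc k - F₀ * Fc k) * A k := hVA.symm
        _ = F₀ * A k + Fc k * A k - F₀ * (Fc k * A k) := by
            rw [sub_mul, add_mul, mul_assoc]
        _ = 0 := by rw [hF₀A, hFkA, mul_zero, add_zero, sub_zero]
      exact (hatoms k).1 hA0
    · -- pLE (A k) F₀ : contradict minimality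
      refine hF₀not (hgen F₀ hF₀L fun j => ?_)
      by_cases hjk : j = k
      · subst hjk; exact hAF
      · exact hF₀dom j (Finset.mem_erase.mpr ⟨hjk, Finset.mem_univ j⟩)
  -- extend the family `M` to ℕ by zero
  set M' : ℕ → H →L[ℂ] H := fun m => if h : m < n then M ⟨m, h⟩ else 0 with hM'def
  have hM'eq : ∀ (j : Fin n), M' (j : ℕ) = M j := by
    intro j
    simp only [hM'def, dif_pos j.isLt, Fin.eta]
  have hM'idem : ∀ m, M' m * M' m = M' m := by
    intro m
    by_cases h : m < n
    · simp only [hM'def, dif_pos h]; exact hidem _ (hML ⟨m, h⟩)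
    · simp only [hM'def, dif_neg h, mul_zero]
  have hM'sa : ∀ m, IsSelfAdjoint (M' m) := by
    intro m
    by_cases h : m < n
    · simp only [hM'def, dif_pos h]; exact hsa _ (hML ⟨m, h⟩)
    · simp only [hM'def, dif_neg h]; exact IsSelfAdjoint.zero _
  have hM'comm : ∀ i j, Commute (M' i) (M' j) := by
    intro i j
    by_cases hi : i < n
    · by_cases hj : j < n
      · simp only [hM'def, dif_pos hi, dif_pos hj]
        exact hcomm _ (hML ⟨i, hi⟩) _ (hML ⟨j, hj⟩)
      · simp only [hM'def, dif_neg hj]; exact Commute.zero_right _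
    · simp only [hM'def, dif_neg hi]; exact Commute.zero_left _
  set W : H →L[ℂ] H := 1 - Cseq M' n with hWdef
  have hWidem : W * W = W := one_sub_idem (Cseq_idem M' hM'idem hM'comm n)
  have hWsa : IsSelfAdjoint W := (IsSelfAdjoint.one _).sub (Cseq_sa M' hM'sa hM'comm n)
  have hWsum : W = ∑ m ∈ Finset.range n, Cseq M' m * M' m := by
    rw [hWdef]; exact Cseq_telescope M' n
  have hWM : ∀ j : Fin n, W * M j = M j := by
    intro j
    have h0 : Cseq M' n * M' (j : ℕ) = 0 := Cseq_mul_eq_zero M' hM'idem hM'comm n j j.isLt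
    rw [hM'eq j] at h0
    rw [hWdef, sub_mul, one_mul, h0, sub_zero]
  have hterm_mem : ∀ (z : H) (j : Fin n),
      (Cseq M' (j : ℕ) * M' (j : ℕ)) z ∈ LinearMap.range (M j : H →ₗ[ℂ] H) := by
    intro z j
    have hc : Cseq M' (j : ℕ) * M' (j : ℕ) = M' (j : ℕ) * Cseq M' (j : ℕ) :=
      Cseq_commute M' hM'comm (j : ℕ) (j : ℕ)
    refine ⟨Cseq M' (j : ℕ) z, ?_⟩
    calc M j (Cseq M' (j : ℕ) z) = (M' (j : ℕ) * Cseq M' (j : ℕ)) z := by rw [hM'eq j]; rfl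
    _ = (Cseq M' (j : ℕ) * M' (j : ℕ)) z := by rw [← hc]
  -- W belongs to L
  obtain ⟨R, hRL, -, hRrange⟩ := hsup (Set.range M) (by rintro q ⟨j, rfl⟩; exact hML j)
  have hWrange : LinearMap.range (W : H →ₗ[ℂ] H) = ⨆ Q ∈ Set.range M, LinearMap.range (Q : H →ₗ[ℂ] H) := by
    apply le_antisymm
    · rintro z ⟨v, rfl⟩
      have hv : W v = ∑ m ∈ Finset.range n, (Cseq M' m * M' m) v := by
        rw [hWsum]
        exact ContinuousLinearMap.sum_apply _ _ _
      show W v ∈ _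
      rw [hv]
      refine Submodule.sum_mem _ fun m hm => ?_
      have hmn : m < n := Finset.mem_range.mp hm
      refine Submodule.mem_iSup_of_mem (M ⟨m, hmn⟩) (Submodule.mem_iSup_of_mem ⟨⟨m, hmn⟩, rfl⟩ ?_)
      exact hterm_mem v ⟨m, hmn⟩
    · apply iSup_le; intro Q; apply iSup_le; rintro ⟨j, rfl⟩
      rintro z ⟨v, rfl⟩
      refine ⟨M j v, ?_⟩
      calc W (M j v) = (W * M j) v := rfl
      _ = M j v := by rw [hWM j]
  have hWL : W ∈ L := by
    have hclosedW : IsClosed (LinearMap.range (W : H →ₗ[ℂ] H) : Set H) := isClosed_range_of_idem hWidem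
    have hcl : (⨆ Q ∈ Set.range M, LinearMap.range (Q : H →ₗ[ℂ] H)).topologicalClosure = LinearMap.range (W : H →ₗ[ℂ] H) := by
      rw [← hWrange]
      exact le_antisymm (Submodule.topologicalClosure_minimal _ le_rfl hclosedW)
        (Submodule.le_topologicalClosure _)
    have : W = R :=
      orthProj_ext hWsa hWidem (hsa R hRL) (hidem R hRL) (hRrange.trans hcl).symm
    rw [this]; exact hRL
  -- P = W
  have hMP : ∀ j : Fin n, pLE (M j) P := fun j => hMmin j P hPL (hdom j)
  have hPW : pLE P W := by
    refine hgen W hWL fun j => ?_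
    show W * A j = A j
    have hMA : M j * A j = A j := hAM j
    rw [← hMA, ← mul_assoc, hWM j]
  have hWP : pLE W P := by
    show P * W = W
    ext z
    show P (W z) = W z
    have hz : W z = ∑ m ∈ Finset.range n, (Cseq M' m * M' m) z := by
      rw [hWsum]; exact ContinuousLinearMap.sum_apply _ _ _
    rw [hz, map_sum]
    refine Finset.sum_congr rfl fun m hm => ?_
    have hmn : m < n := Finset.mem_range.mp hm
    refine fix_of_mem_range hPidem ?_
    obtain ⟨v, hv⟩ := hterm_mem z ⟨m, hmn⟩
    rw [← hv]
    have hPM : P * M ⟨m, hmn⟩ = M ⟨m, hmn⟩ := hMP ⟨m, hmn⟩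
    refine ⟨M ⟨m, hmn⟩ v, ?_⟩
    calc P (M ⟨m, hmn⟩ v) = (P * M ⟨m, hmn⟩) v := rfl
    _ = M ⟨m, hmn⟩ v := by rw [hPM]
  have hPeqW : P = W := pLE_antisymm hPsa hWsa hPW hWP
  -- Part 2
  have part2 : ∀ y : H, P y = y → ∃ T ∈ AlgL L, T x = y := by
    intro y hy
    set c : Fin n → H := fun j => (Cseq M' (j : ℕ) * M' (j : ℕ)) y with hcdef
    have hsumc : ∑ j, c j = y := by
      have hWy : W y = y := by rw [← hPeqW]; exact hy
      have hy' : W y = ∑ m ∈ Finset.range n, (Cseq M' m * M' m) y := by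
        rw [hWsum]; exact ContinuousLinearMap.sum_apply _ _ _
      rw [← hWy, hy']
      exact (Fin.sum_univ_eq_sum_range (fun m => (Cseq M' m * M' m) y) n)
    have hcmem : ∀ j, c j ∈ LinearMap.range (M j : H →ₗ[ℂ] H) := fun j => hterm_mem y j
    set T : H →L[ℂ] H :=
      ∑ j : Fin n, (innerSL ℂ (A j x)).smulRight ((((‖A j x‖ : ℂ) ^ 2)⁻¹) • c j) with hTdef
    have hTmem : T ∈ AlgL L := by
      rw [hTdef]
      refine Finset.sum_induction _ (· ∈ AlgL L) ?_ ?_ ?_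
      · intro a b ha hb Q hQ
        show (1 - Q) * ((a + b) * Q) = 0
        have ha' : (1 - Q) * (a * Q) = 0 := ha Q hQ
        have hb' : (1 - Q) * (b * Q) = 0 := hb Q hQ
        rw [add_mul, mul_add, ha', hb', add_zero]
      · intro Q hQ
        show (1 - Q) * ((0 : H →L[ℂ] H) * Q) = 0
        rw [zero_mul, mul_zero]
      · intro j _
        intro Q hQ
        show (1 - Q) * (((innerSL ℂ (A j x)).smulRight ((((‖A j x‖ : ℂ) ^ 2)⁻¹) • c j)) * Q) = 0
        ext z
        show (1 - Q) ((innerSL ℂ (A j x)).smulRight ((((‖A j x‖ : ℂ) ^ 2)⁻¹) • c j) (Q z)) = 0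
        rw [ContinuousLinearMap.smulRight_apply]
        rcases dich j Q hQ with h | h
        · have hQA : Q * A j = 0 := by rw [← hAcomm j Q hQ, h]
          have hQAx : Q (A j x) = 0 := by
            calc Q (A j x) = (Q * A j) x := rfl
            _ = 0 := by rw [hQA]; rfl
          have hinner : (innerSL ℂ (A j x)) (Q z) = 0 := by
            show ⟪A j x, Q z⟫_ℂ = 0
            rw [inner_self_adjoint Q (hsa Q hQ), hQAx, inner_zero_left]
          rw [hinner, zero_smul, map_zero]
        · have hMQ : Q * M j = M j := hMmin j Q hQ h
          have hQc : Q (c j) = c j := by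
            obtain ⟨v, hv⟩ := hcmem j
            rw [← hv]
            calc Q (M j v) = (Q * M j) v := rfl
            _ = M j v := by rw [hMQ]
          have hQy : Q ((((‖A j x‖ : ℂ) ^ 2)⁻¹) • c j) = (((‖A j x‖ : ℂ) ^ 2)⁻¹) • c j := by
            rw [map_smul, hQc]
          rw [map_smul]
          rw [ContinuousLinearMap.sub_apply, ContinuousLinearMap.one_apply, hQy, sub_self,
            smul_zero]
    have hTx : T x = y := by
      have happ : ∀ j : Fin n,
          ((innerSL ℂ (A j x)).smulRight ((((‖A j x‖ : ℂ) ^ 2)⁻¹) • c j)) x = c j := by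
        intro j
        have hinner : ⟪A j x, x⟫_ℂ = (‖A j x‖ : ℂ) ^ 2 := by
          have h1 : ⟪A j x, A j x⟫_ℂ = ⟪A j x, x⟫_ℂ := by
            rw [inner_self_adjoint (A j) (hAsa j)]
            congr 1
            calc A j (A j x) = (A j * A j) x := rfl
            _ = A j x := by rw [hAidem j]
          rw [← h1]
          exact inner_self_eq_norm_sq_to_K _
        rw [ContinuousLinearMap.smulRight_apply]
        show ⟪A j x, x⟫_ℂ • ((((‖A j x‖ : ℂ) ^ 2)⁻¹) • c j) = c j
        rw [hinner, smul_smul, mul_inv_cancel₀, one_smul]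
        have hne : ‖A j x‖ ≠ 0 := norm_ne_zero_iff.mpr (part1 j)
        intro hcon
        apply hne
        have : (‖A j x‖ : ℂ) = 0 := by
          exact pow_eq_zero_iff (by norm_num) |>.mp hcon
        exact_mod_cast this
      rw [hTdef]
      rw [ContinuousLinearMap.sum_apply]
      rw [Finset.sum_congr rfl fun j _ => happ j]
      exact hsumc
    exact ⟨T, hTmem, hTx⟩
  -- Part 3
  have horbit : orbit L x = (LinearMap.range (P : H →ₗ[ℂ] H) : Set H) := by
    apply Set.Subset.antisymm
    · intro y hy
      rw [hPrange]
      exact subset_closure hy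
    · intro y hy
      have hy' : P y = y := fix_of_mem_range hPidem hy
      exact part2 y hy'
  refine ⟨part1, part2, ?_⟩
  rw [horbit]
  exact isClosed_range_of_idem hPidem
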